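/- Let m, n ≥ 1 be odd integers and G = K_{m,n} the non-abelian metacyclic group of order 2mn presented by a^m = 1, b^{2n} = 1, bab⁻¹ = a⁻¹. For even integers r = 2r₁ and s = 2s₁ with 1 ≤ r, s ≤ 2mn and r₁ + s₁ - 1 ≤ mn, there exist subsets A, B ⊆ G with |A| = r, |B| = s, and |AB| ≤ r + s - 2. -/

import Mathlib

open scoped Pointwise

/-- The relations of the metacyclic presentation
`K_{m,n} = ⟨a, b : a^m = 1, b^(2n) = a^g, b a b⁻¹ = a⁻¹⟩`, with generator `0`
playing the role of `a` and generator `1` playing the role of `b`. -/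
def Krels (m n g : ℕ) : Set (FreeGroup (Fin 2)) :=
  {FreeGroup.of 0 ^ m,
   FreeGroup.of 1 ^ (2 * n) * (FreeGroup.of 0 ^ g)⁻¹,
   FreeGroup.of 1 * FreeGroup.of 0 * (FreeGroup.of 1)⁻¹ * FreeGroup.of 0}

/-- Concrete model of the metacyclic group: pairs with twisted multiplication. -/
structure Kc (m n : ℕ) where
  a : ZMod m
  b : ZMod (2 * n)

namespace Kc

variable {m n : ℕ}

@[ext] lemma ext' {p q : Kc m n} (h1 : p.a = q.a) (h2 : p.b = q.b) : p = q := by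
  cases p; cases q; simp_all

/-- sign character -/
def chi (m n : ℕ) (j : ZMod (2 * n)) : ZMod m :=
  if (ZMod.castHom (⟨n, rfl⟩ : (2:ℕ) ∣ 2 * n) (ZMod 2) j) = 0 then 1 else -1

lemma zmod2_cases (c : ZMod 2) : c = 0 ∨ c = 1 := by revert c; decide

lemma chi_zero : chi m n 0 = 1 := by simp [chi]

lemma chi_add (j l : ZMod (2 * n)) : chi m n (j + l) = chi m n j * chi m n l := by
  unfold chi
  rw [map_add]
  rcases zmod2_cases (ZMod.castHom (⟨n, rfl⟩ : (2:ℕ) ∣ 2 * n) (ZMod 2) j) with h1 | h1 <;>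
    rcases zmod2_cases (ZMod.castHom (⟨n, rfl⟩ : (2:ℕ) ∣ 2 * n) (ZMod 2) l) with h2 | h2 <;>
      rw [h1, h2] <;>
      simp [show ((1:ZMod 2)) + 1 = 0 from by decide, show (1:ZMod 2) ≠ 0 from by decide,
        neg_mul_neg]

lemma chi_neg (j : ZMod (2 * n)) : chi m n (-j) = chi m n j := by
  unfold chi
  rw [map_neg]
  rcases zmod2_cases (ZMod.castHom (⟨n, rfl⟩ : (2:ℕ) ∣ 2 * n) (ZMod 2) j) with h1 | h1 <;>
    rw [h1] <;> simp [show -(1:ZMod 2) = 1 from by decide, show (1:ZMod 2) ≠ 0 from by decide]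

lemma chi_mul_self (j : ZMod (2 * n)) : chi m n j * chi m n j = 1 := by
  unfold chi
  rcases zmod2_cases (ZMod.castHom (⟨n, rfl⟩ : (2:ℕ) ∣ 2 * n) (ZMod 2) j) with h1 | h1 <;>
    rw [h1] <;> norm_num

instance : Mul (Kc m n) := ⟨fun p q => ⟨p.a + chi m n p.b * q.a, p.b + q.b⟩⟩
instance : One (Kc m n) := ⟨⟨0, 0⟩⟩
instance : Inv (Kc m n) := ⟨fun p => ⟨-(chi m n p.b * p.a), -p.b⟩⟩

lemma mul_def (p q : Kc m n) : p * q = ⟨p.a + chi m n p.b * q.a, p.b + q.b⟩ := rfl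
lemma one_def : (1 : Kc m n) = ⟨0, 0⟩ := rfl
lemma inv_def (p : Kc m n) : p⁻¹ = ⟨-(chi m n p.b * p.a), -p.b⟩ := rfl

instance : Group (Kc m n) :=
  Group.ofLeftAxioms
    (fun p q r => by
      simp only [mul_def, chi_add]
      ext <;> simp <;> ring)
    (fun p => by simp [mul_def, one_def, chi_zero])
    (fun p => by
      simp only [mul_def, inv_def, one_def, chi_neg]
      ext <;> simp)

/-- the image of `a` -/
def xg : Kc m n := ⟨1, 0⟩
/-- the image of `b` -/
def yg : Kc m n := ⟨0, 1⟩

lemma xg_pow (t : ℕ) : (xg : Kc m n) ^ t = ⟨(t : ZMod m), 0⟩ := by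
  induction t with
  | zero => simp [one_def]
  | succ t ih => rw [pow_succ, ih, mul_def]; ext <;> simp [xg, chi_zero]

lemma xg_zpow (e : ℤ) : (xg : Kc m n) ^ e = ⟨(e : ZMod m), 0⟩ := by
  obtain ⟨t, rfl | rfl⟩ := Int.eq_nat_or_neg e
  · rw [zpow_natCast, xg_pow]; push_cast; rfl
  · rw [zpow_neg, zpow_natCast, xg_pow, inv_def]
    ext <;> simp [chi_zero]

lemma yg_pow (t : ℕ) : (yg : Kc m n) ^ t = ⟨0, (t : ZMod (2 * n))⟩ := by
  induction t with
  | zero => simp [one_def]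
  | succ t ih => rw [pow_succ, ih, mul_def]; ext <;> simp [yg]

lemma chi_one' : chi m n 1 = -1 := by
  unfold chi
  rw [map_one]
  norm_num

end Kc


namespace K14

/-- the image of the generator `a` in the presented group -/
def xx (m n : ℕ) : PresentedGroup (Krels m n 0) := PresentedGroup.of 0
/-- the image of the generator `b` in the presented group -/
def yy (m n : ℕ) : PresentedGroup (Krels m n 0) := PresentedGroup.of 1

lemma mk_eq_one {m n : ℕ} {w : FreeGroup (Fin 2)} (h : w ∈ Krels m n 0) :
    PresentedGroup.mk (Krels m n 0) w = 1 :=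
  (QuotientGroup.eq_one_iff _).mpr (Subgroup.subset_normalClosure h)

lemma x_pow_m (m n : ℕ) : (xx m n) ^ m = 1 := by
  have h : PresentedGroup.mk (Krels m n 0) (FreeGroup.of 0 ^ m) = 1 :=
    mk_eq_one (by simp [Krels])
  rw [map_pow] at h
  exact h

lemma y_pow_2n (m n : ℕ) : (yy m n) ^ (2 * n) = 1 := by
  have h : PresentedGroup.mk (Krels m n 0)
      (FreeGroup.of 1 ^ (2 * n) * (FreeGroup.of 0 ^ 0)⁻¹) = 1 :=
    mk_eq_one (by simp [Krels])
  exact (by simpa [map_pow] using h : PresentedGroup.mk (Krels m n 0) (FreeGroup.of 1) ^ (2 * n) = 1)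

lemma yxy (m n : ℕ) : yy m n * xx m n * (yy m n)⁻¹ = (xx m n)⁻¹ := by
  have h : PresentedGroup.mk (Krels m n 0)
      (FreeGroup.of 1 * FreeGroup.of 0 * (FreeGroup.of 1)⁻¹ * FreeGroup.of 0) = 1 :=
    mk_eq_one (by simp [Krels])
  simp only [map_mul, map_inv] at h
  exact eq_inv_of_mul_eq_one_left h

lemma y_conj_zpow (m n : ℕ) (e : ℤ) :
    yy m n * (xx m n) ^ e * (yy m n)⁻¹ = (xx m n) ^ (-e) := by
  have h1 : (MulAut.conj (yy m n)) ((xx m n) ^ e) = ((MulAut.conj (yy m n)) (xx m n)) ^ e :=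
    map_zpow _ _ _
  have h2 : (MulAut.conj (yy m n)) (xx m n) = (xx m n)⁻¹ := by
    simpa [MulAut.conj_apply] using yxy m n
  have h3 : (MulAut.conj (yy m n)) ((xx m n) ^ e) = (xx m n) ^ (-e) := by
    rw [h1, h2, inv_zpow, zpow_neg]
  simpa [MulAut.conj_apply, mul_assoc] using h3

lemma y_mul_x_zpow (m n : ℕ) (e : ℤ) :
    yy m n * (xx m n) ^ e = (xx m n) ^ (-e) * yy m n := by
  have h := y_conj_zpow m n e
  calc yy m n * (xx m n) ^ e
      = (yy m n * (xx m n) ^ e * (yy m n)⁻¹) * yy m n := by group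
    _ = (xx m n) ^ (-e) * yy m n := by rw [h]

lemma y_pow_mul_x_zpow (m n : ℕ) (f : ℕ) (e : ℤ) :
    (yy m n) ^ f * (xx m n) ^ e = (xx m n) ^ ((-1) ^ f * e) * (yy m n) ^ f := by
  induction f with
  | zero => simp
  | succ f ih =>
    rw [pow_succ', mul_assoc, ih, ← mul_assoc, y_mul_x_zpow, mul_assoc, ← pow_succ']
    congr 1
    ring_nf

lemma g_mul (m n : ℕ) (e e' : ℤ) (f f' : ℕ) :
    (xx m n ^ e * yy m n ^ f) * (xx m n ^ e' * yy m n ^ f')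
      = xx m n ^ (e + (-1) ^ f * e') * yy m n ^ (f + f') := by
  rw [mul_assoc, ← mul_assoc (yy m n ^ f), y_pow_mul_x_zpow, mul_assoc, ← pow_add,
    ← mul_assoc, ← zpow_add]

lemma x_zpow_mod (m n : ℕ) (hm : 0 < m) (e : ℤ) :
    (xx m n) ^ e = (xx m n) ^ (e % (m : ℤ)) := by
  conv_lhs => rw [← Int.mul_ediv_add_emod e (m : ℤ)]
  rw [zpow_add, zpow_mul, zpow_natCast, x_pow_m, one_zpow, one_mul]

lemma y_pow_red (m n : ℕ) (f : ℕ) : (yy m n) ^ (f + 2 * n) = (yy m n) ^ f := by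
  rw [pow_add, y_pow_2n, mul_one]

end K14

namespace K14

/-- the map on generators -/
def fK (m n : ℕ) : Fin 2 → Kc m n := fun i => if i = 0 then Kc.xg else Kc.yg

lemma fK_rels (m n : ℕ) : ∀ r ∈ Krels m n 0, FreeGroup.lift (fK m n) r = 1 := by
  intro r hr
  simp only [Krels, Set.mem_insert_iff, Set.mem_singleton_iff] at hr
  rcases hr with rfl | rfl | rfl
  · rw [map_pow, FreeGroup.lift_apply_of]
    show (Kc.xg : Kc m n) ^ m = 1
    rw [Kc.xg_pow]
    ext <;> simp [Kc.one_def, ZMod.natCast_self]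
  · rw [map_mul, map_inv, map_pow, map_pow, FreeGroup.lift_apply_of, FreeGroup.lift_apply_of]
    show (Kc.yg : Kc m n) ^ (2 * n) * ((Kc.xg : Kc m n) ^ 0)⁻¹ = 1
    rw [Kc.yg_pow, pow_zero, inv_one, mul_one]
    ext <;> simp [Kc.one_def, ZMod.natCast_self]
  · simp only [map_mul, map_inv, FreeGroup.lift_apply_of]
    show (Kc.yg : Kc m n) * Kc.xg * (Kc.yg : Kc m n)⁻¹ * Kc.xg = 1
    rw [Kc.mul_def, Kc.mul_def, Kc.inv_def, Kc.mul_def, Kc.one_def]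
    simp only [Kc.xg, Kc.yg]
    ext
    · show (0 + Kc.chi m n 1 * 1 + Kc.chi m n (1 + 0) * -(Kc.chi m n 1 * 0))
          + Kc.chi m n (1 + 0 + -1) * 1 = 0
      rw [Kc.chi_one']
      norm_num [Kc.chi_zero]
    · show ((1 : ZMod (2*n)) + 0 + -1) + 0 = 0
      ring

/-- homomorphism from the presented group to the concrete group -/
noncomputable def psi (m n : ℕ) : PresentedGroup (Krels m n 0) →* Kc m n :=
  PresentedGroup.toGroup (fK_rels m n)

lemma psi_x (m n : ℕ) : psi m n (xx m n) = Kc.xg := by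
  rw [xx, psi, PresentedGroup.toGroup.of]; rfl

lemma psi_y (m n : ℕ) : psi m n (yy m n) = Kc.yg := by
  rw [yy, psi, PresentedGroup.toGroup.of]; rfl

lemma psi_g (m n : ℕ) (e : ℤ) (f : ℕ) :
    psi m n (xx m n ^ e * yy m n ^ f) = ⟨(e : ZMod m), (f : ZMod (2 * n))⟩ := by
  rw [map_mul, map_zpow, map_pow, psi_x, psi_y, Kc.xg_zpow, Kc.yg_pow, Kc.mul_def]
  ext <;> simp

end K14
namespace K14

lemma decomp (m n r : ℕ) (hm : 1 ≤ m) (h1 : 1 ≤ r) (h2 : r ≤ m * n) :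
    ∃ p ρ, 1 ≤ ρ ∧ ρ ≤ m ∧ p * m + ρ = r ∧ p < n := by
  refine ⟨(r - 1) / m, (r - 1) % m + 1, by omega, ?_, ?_, ?_⟩
  · have := Nat.mod_lt (r - 1) (show 0 < m by omega)
    omega
  · have h := Nat.div_add_mod (r - 1) m
    have hc : (r - 1) / m * m = m * ((r - 1) / m) := mul_comm _ _
    set P := (r - 1) / m * m with hP
    set Q := m * ((r - 1) / m) with hQ
    omega
  · by_contra h
    push_neg at h
    have h3 : m * n ≤ m * ((r - 1) / m) := Nat.mul_le_mul_left m h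
    have h4 := Nat.div_add_mod (r - 1) m
    set Q := m * ((r - 1) / m) with hQ
    set S := m * n with hS
    omega

lemma card_base (m n r : ℕ) (hm : 1 ≤ m) (hr : r ≤ m * n) :
    ((Finset.range m ×ˢ Finset.range n).filter (fun z => z.2 * m + z.1 < r)).card = r := by
  conv_rhs => rw [← Finset.card_range r]
  apply Finset.card_bij' (i := fun z _ => z.2 * m + z.1) (j := fun e _ => (e % m, e / m))
  · intro z hz
    simp only [Finset.mem_filter] at hz
    simp [hz.2]
  · intro e he
    simp only [Finset.mem_range] at he
    have h1 : e % m < m := Nat.mod_lt _ (by omega)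
    have h2 : e / m < n := by
      rw [Nat.div_lt_iff_lt_mul (by omega)]
      calc e < r := he
        _ ≤ m * n := hr
        _ = n * m := mul_comm _ _
    have h3 : e / m * m + e % m = e := by
      rw [mul_comm]
      exact Nat.div_add_mod e m
    simp only [Finset.mem_filter, Finset.mem_product, Finset.mem_range]
    exact ⟨⟨h1, h2⟩, by omega⟩
  · intro z hz
    simp only [Finset.mem_filter, Finset.mem_product, Finset.mem_range] at hz
    obtain ⟨⟨h1, h2⟩, _⟩ := hz
    have e1 : (z.2 * m + z.1) % m = z.1 := by
      rw [add_comm, Nat.add_mul_mod_self_right]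
      exact Nat.mod_eq_of_lt h1
    have e2 : (z.2 * m + z.1) / m = z.2 := by
      rw [add_comm, Nat.add_mul_div_right _ _ (show 0 < m by omega), Nat.div_eq_of_lt h1, Nat.zero_add]
    exact Prod.ext e1 e2
  · intro e he
    simp only
    rw [mul_comm]
    exact Nat.div_add_mod e m

end K14

namespace K14

/-- index set for levels -/
def baseF (m r nn : ℕ) : Finset (ℕ × ℕ) :=
  (Finset.range m ×ˢ Finset.range nn).filter (fun z => z.2 * m + z.1 < r)

lemma card_baseF (m n r : ℕ) (hm : 1 ≤ m) (hr : r ≤ m * n) : (baseF m r n).card = r := by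
  rw [baseF]
  conv_rhs => rw [← Finset.card_range r]
  apply Finset.card_bij' (i := fun z _ => z.2 * m + z.1) (j := fun e _ => (e % m, e / m))
  · intro z hz
    simp only [Finset.mem_filter] at hz
    simp [hz.2]
  · intro e he
    simp only [Finset.mem_range] at he
    have h1 : e % m < m := Nat.mod_lt _ (by omega)
    have h2 : e / m < n := by
      rw [Nat.div_lt_iff_lt_mul (by omega)]
      calc e < r := he
        _ ≤ m * n := hr
        _ = n * m := mul_comm _ _
    have h3 : e / m * m + e % m = e := by
      rw [mul_comm]
      exact Nat.div_add_mod e m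
    simp only [Finset.mem_filter, Finset.mem_product, Finset.mem_range]
    exact ⟨⟨h1, h2⟩, by omega⟩
  · intro z hz
    simp only [Finset.mem_filter, Finset.mem_product, Finset.mem_range] at hz
    obtain ⟨⟨h1, h2⟩, _⟩ := hz
    have e1 : (z.2 * m + z.1) % m = z.1 := by
      rw [add_comm, Nat.add_mul_mod_self_right]
      exact Nat.mod_eq_of_lt h1
    have e2 : (z.2 * m + z.1) / m = z.2 := by
      rw [add_comm, Nat.add_mul_div_right _ _ (show 0 < m by omega), Nat.div_eq_of_lt h1,
        Nat.zero_add]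
    exact Prod.ext e1 e2
  · intro e he
    simp only
    rw [mul_comm]
    exact Nat.div_add_mod e m

/-- index set for the sets A and B -/
def FF (m r n : ℕ) : Finset ((ℕ × ℕ) × ℕ) := baseF m r n ×ˢ Finset.range 2

/-- parametrization of the set A -/
def mapA (m n : ℕ) : (ℕ × ℕ) × ℕ → PresentedGroup (Krels m n 0) := fun z =>
  xx m n ^ (z.1.1 : ℤ) * yy m n ^ (z.1.2 + z.2 * n)

/-- parametrization of the set B -/
def mapB (m n : ℕ) : (ℕ × ℕ) × ℕ → PresentedGroup (Krels m n 0) := fun z =>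
  xx m n ^ ((-1) ^ z.2 * (z.1.1 : ℤ)) * yy m n ^ (z.1.2 + z.2 * n)

lemma exp_lt {n j δ : ℕ} (hj : j < n) (hδ : δ < 2) : j + δ * n < 2 * n := by
  rcases (by omega : δ = 0 ∨ δ = 1) with h | h <;> subst h <;> simp <;> omega

lemma second_eq {n j j' δ δ' : ℕ} (hj : j < n) (hj' : j' < n) (hδ : δ < 2) (hδ' : δ' < 2)
    (h : j + δ * n = j' + δ' * n) : j = j' ∧ δ = δ' := by
  rcases (by omega : δ = 0 ∨ δ = 1) with h1 | h1 <;>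
    rcases (by omega : δ' = 0 ∨ δ' = 1) with h2 | h2 <;> subst h1 h2 <;> simp at h <;> omega

lemma injA (m n r : ℕ) : Set.InjOn (mapA m n) ↑(FF m r n) := by
  rintro ⟨⟨i, j⟩, δ⟩ hz ⟨⟨i', j'⟩, δ'⟩ hw h
  simp only [FF, baseF, Finset.coe_product, Finset.coe_filter, Set.mem_prod, Set.mem_setOf_eq,
    Finset.mem_product, Finset.mem_range, Finset.mem_coe, Finset.mem_filter] at hz hw
  have h2 := congrArg (psi m n) h
  simp only [mapA] at h2
  rw [psi_g, psi_g] at h2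
  have ha := congrArg Kc.a h2
  have hb := congrArg Kc.b h2
  simp only at ha hb
  push_cast at ha
  have hi : i = i' := by
    have := congrArg ZMod.val ha
    rwa [ZMod.val_cast_of_lt hz.1.1.1, ZMod.val_cast_of_lt hw.1.1.1] at this
  have hf : j + δ * n = j' + δ' * n := by
    have := congrArg ZMod.val hb
    rwa [ZMod.val_cast_of_lt (exp_lt hz.1.1.2 hz.2), ZMod.val_cast_of_lt (exp_lt hw.1.1.2 hw.2)]
      at this
  obtain ⟨hj, hδ⟩ := second_eq hz.1.1.2 hw.1.1.2 hz.2 hw.2 hf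
  simp [hi, hj, hδ]

lemma injB (m n r : ℕ) : Set.InjOn (mapB m n) ↑(FF m r n) := by
  rintro ⟨⟨i, j⟩, δ⟩ hz ⟨⟨i', j'⟩, δ'⟩ hw h
  simp only [FF, baseF, Finset.coe_product, Finset.coe_filter, Set.mem_prod, Set.mem_setOf_eq,
    Finset.mem_product, Finset.mem_range, Finset.mem_coe, Finset.mem_filter] at hz hw
  have h2 := congrArg (psi m n) h
  simp only [mapB] at h2
  rw [psi_g, psi_g] at h2
  have ha := congrArg Kc.a h2
  have hb := congrArg Kc.b h2
  simp only at ha hb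
  have hf : j + δ * n = j' + δ' * n := by
    have := congrArg ZMod.val hb
    rwa [ZMod.val_cast_of_lt (exp_lt hz.1.1.2 hz.2), ZMod.val_cast_of_lt (exp_lt hw.1.1.2 hw.2)]
      at this
  obtain ⟨hj, hδ⟩ := second_eq hz.1.1.2 hw.1.1.2 hz.2 hw.2 hf
  subst hδ
  have hi : i = i' := by
    rcases (by omega : δ = 0 ∨ δ = 1) with h1 | h1 <;> subst h1 <;>
      simp only [pow_zero, pow_one, one_mul, neg_one_mul] at ha
    · push_cast at ha
      have := congrArg ZMod.val ha
      rwa [ZMod.val_cast_of_lt hz.1.1.1, ZMod.val_cast_of_lt hw.1.1.1] at this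
    · push_cast at ha
      rw [neg_inj] at ha
      have := congrArg ZMod.val ha
      rwa [ZMod.val_cast_of_lt hz.1.1.1, ZMod.val_cast_of_lt hw.1.1.1] at this
  simp [hi, hj]

lemma cardA (m n r : ℕ) (hm : 1 ≤ m) (hr : r ≤ m * n) :
    Nat.card ↥(mapA m n '' ↑(FF m r n)) = 2 * r := by
  rw [Nat.card_coe_set_eq, Set.ncard_image_of_injOn (injA m n r), Set.ncard_coe_finset,
    FF, Finset.card_product, card_baseF m n r hm hr, Finset.card_range]
  omega

lemma cardB (m n r : ℕ) (hm : 1 ≤ m) (hr : r ≤ m * n) :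
    Nat.card ↥(mapB m n '' ↑(FF m r n)) = 2 * r := by
  rw [Nat.card_coe_set_eq, Set.ncard_image_of_injOn (injB m n r), Set.ncard_coe_finset,
    FF, Finset.card_product, card_baseF m n r hm hr, Finset.card_range]
  omega

end K14

open scoped Pointwise


theorem stmt14 (m n r₁ s₁ : ℕ) (hmodd : Odd m) (hnodd : Odd n)
    (hm : 1 ≤ m) (hn : 1 ≤ n)
    (hna : ¬ ∀ x y : PresentedGroup (Krels m n 0), x * y = y * x)
    (hr : 1 ≤ r₁) (hs : 1 ≤ s₁) (hrb : 2 * r₁ ≤ 2 * m * n) (hsb : 2 * s₁ ≤ 2 * m * n)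
    (hrs : r₁ + s₁ - 1 ≤ m * n) :
    ∃ A B : Set (PresentedGroup (Krels m n 0)),
      Nat.card A = 2 * r₁ ∧ Nat.card B = 2 * s₁ ∧
        Nat.card ↥(A * B) ≤ 2 * r₁ + 2 * s₁ - 2 := by
  classical
  obtain ⟨p, ρ, hρ1, hρm, hr1, hpn⟩ := K14.decomp m n r₁ hm hr (by omega)
  obtain ⟨q, σ, hσ1, hσm, hs1, hqn⟩ := K14.decomp m n s₁ hm hs (by omega)
  refine ⟨K14.mapA m n '' ↑(K14.FF m r₁ n), K14.mapB m n '' ↑(K14.FF m s₁ n),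
    K14.cardA m n r₁ hm (by omega), K14.cardB m n s₁ hm (by omega), ?_⟩
  -- the target index set
  set aa : ℕ → ℤ := fun μ => if (-1 : ℤ) ^ (p + μ) = 1 then 0 else 1 - (σ : ℤ) with haa
  set Etop : ℕ → Finset ℕ :=
    fun μ => (Finset.Icc (aa μ) (aa μ + ((ρ + σ - 2 : ℕ) : ℤ))).image
      (fun e => (e % (m : ℤ)).toNat) with hEtop
  set Fidx : Finset (ℕ × ℕ) :=
    ((Finset.range m ×ˢ (Finset.range (p + q) ∪ (Finset.range (p + q)).image (· + n))) ∪
      Etop 0 ×ˢ {p + q}) ∪ Etop 1 ×ˢ {p + q + n} with hFidx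
  have hsub : (K14.mapA m n '' ↑(K14.FF m r₁ n)) * (K14.mapB m n '' ↑(K14.FF m s₁ n)) ⊆
      (fun z : ℕ × ℕ => K14.xx m n ^ (z.1 : ℤ) * K14.yy m n ^ z.2) '' ↑Fidx := by
    rintro c hc
    rw [Set.mem_mul] at hc
    obtain ⟨u, hu, v, hv, rfl⟩ := hc
    obtain ⟨⟨⟨i, j⟩, δ⟩, hza, rfl⟩ := hu
    obtain ⟨⟨⟨k, l⟩, δ'⟩, hzb, rfl⟩ := hv
    simp only [K14.FF, K14.baseF, Finset.coe_product, Finset.coe_filter, Set.mem_prod,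
      Set.mem_setOf_eq, Finset.mem_product, Finset.mem_range, Finset.mem_coe,
      Finset.mem_filter] at hza hzb
    obtain ⟨⟨⟨him, hjn⟩, hcondA⟩, hδ⟩ := hza
    obtain ⟨⟨⟨hkm, hln⟩, hcondB⟩, hδ'⟩ := hzb
    simp only [K14.mapA, K14.mapB]
    rw [K14.g_mul]
    set μ := (δ + δ') % 2 with hμ
    have hμ2 : μ = 0 ∨ μ = 1 := by omega
    have hn2 : n % 2 = 1 := Nat.odd_iff.mp hnodd
    have hsign : (-1 : ℤ) ^ (j + δ * n) * (-1 : ℤ) ^ δ' = (-1 : ℤ) ^ (j + μ) := by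
      rw [← pow_add, neg_one_pow_eq_pow_mod_two, neg_one_pow_eq_pow_mod_two (n := j + μ)]
      congr 1
      rcases (by omega : δ = 0 ∨ δ = 1) with h1 | h1 <;>
        rcases (by omega : δ' = 0 ∨ δ' = 1) with h2 | h2 <;> subst h1 h2 <;> simp [hμ] <;> omega
    set E : ℤ := (i : ℤ) + (-1 : ℤ) ^ (j + μ) * (k : ℤ) with hE
    set F : ℕ := j + l + μ * n with hF
    have hcc : K14.xx m n ^ ((i : ℤ) + (-1 : ℤ) ^ (j + δ * n) * ((-1 : ℤ) ^ δ' * (k : ℤ))) *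
        K14.yy m n ^ (j + δ * n + (l + δ' * n)) = K14.xx m n ^ E * K14.yy m n ^ F := by
      have e1 : (i : ℤ) + (-1 : ℤ) ^ (j + δ * n) * ((-1 : ℤ) ^ δ' * (k : ℤ)) = E := by
        rw [hE, ← mul_assoc, hsign]
      rw [e1]
      congr 1
      rcases (by omega : δ = 0 ∨ δ = 1) with h1 | h1 <;>
        rcases (by omega : δ' = 0 ∨ δ' = 1) with h2 | h2 <;> subst h1 h2
      · simp [hF, hμ]
      · simp only [hF, hμ]; norm_num; congr 1; omega
      · simp only [hF, hμ]; norm_num; congr 1; omega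
      · simp only [hF, hμ]
        norm_num
        have e2 : j + n + (l + n) = (j + l) + 2 * n := by ring
        rw [e2, K14.y_pow_red]
    rw [hcc, K14.x_zpow_mod m n (by omega)]
    have hEnn : 0 ≤ E % (m : ℤ) := Int.emod_nonneg E (by exact_mod_cast (by omega : m ≠ 0))
    have hEml : E % (m : ℤ) < (m : ℤ) := Int.emod_lt_of_pos E (by exact_mod_cast hm)
    refine ⟨((E % (m : ℤ)).toNat, F), ?_, ?_⟩
    swap
    · simp only
      rw [Int.toNat_of_nonneg hEnn]
    rw [Finset.mem_coe, hFidx]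
    by_cases hcase : j + l < p + q
    · apply Finset.mem_union_left
      apply Finset.mem_union_left
      rw [Finset.mem_product]
      refine ⟨Finset.mem_range.mpr (by omega), ?_⟩
      rcases hμ2 with h1 | h1 <;> rw [hF, h1]
      · apply Finset.mem_union_left
        exact Finset.mem_range.mpr (by omega)
      · apply Finset.mem_union_right
        exact Finset.mem_image.mpr ⟨j + l, Finset.mem_range.mpr hcase, by omega⟩
    · -- top level
      have hjp : j ≤ p := by
        by_contra hcon
        push_neg at hcon
        have h5 : (p + 1) * m ≤ j * m := Nat.mul_le_mul hcon (le_refl m)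
        have h6 : p * m + m ≤ j * m := by
          calc p * m + m = (p + 1) * m := by ring
            _ ≤ j * m := h5
        linarith
      have hlq : l ≤ q := by
        by_contra hcon
        push_neg at hcon
        have h5 : (q + 1) * m ≤ l * m := Nat.mul_le_mul hcon (le_refl m)
        have h6 : q * m + m ≤ l * m := by
          calc q * m + m = (q + 1) * m := by ring
            _ ≤ l * m := h5
        linarith
      have hj : j = p := by omega
      have hl : l = q := by omega
      subst hj hl
      have hiρ : i < ρ := by linarith
      have hkσ : k < σ := by linarith
      have hEmem : E ∈ Finset.Icc (aa μ) (aa μ + ((ρ + σ - 2 : ℕ) : ℤ)) := by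
        rw [Finset.mem_Icc]
        rcases neg_one_pow_eq_or ℤ (j + μ) with hsg | hsg
        · rw [haa]
          simp only [hsg, if_pos]
          rw [hE, hsg, one_mul]
          constructor <;> push_cast <;> omega
        · rw [haa]
          simp only
          rw [if_neg (by rw [hsg]; norm_num)]
          rw [hE, hsg, neg_one_mul]
          constructor <;> push_cast <;> omega
      have hmem2 : (E % (m : ℤ)).toNat ∈ Etop μ := by
        rw [hEtop]
        exact Finset.mem_image.mpr ⟨E, hEmem, rfl⟩
      rcases hμ2 with h1 | h1 <;> rw [h1] at hmem2
      · apply Finset.mem_union_left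
        apply Finset.mem_union_right
        rw [Finset.mem_product]
        refine ⟨hmem2, Finset.mem_singleton.mpr ?_⟩
        rw [hF, h1]
        omega
      · apply Finset.mem_union_right
        rw [Finset.mem_product]
        refine ⟨hmem2, Finset.mem_singleton.mpr ?_⟩
        rw [hF, h1]
        omega
  -- cardinality bound
  have hEcard : ∀ μ : ℕ, (Etop μ).card ≤ ρ + σ - 1 := by
    intro μ
    refine Finset.card_image_le.trans ?_
    rw [Int.card_Icc]
    have e1 : aa μ + ((ρ + σ - 2 : ℕ) : ℤ) + 1 - aa μ = ((ρ + σ - 2 : ℕ) : ℤ) + 1 := by ring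
    rw [e1]
    omega
  have hFcard : Fidx.card ≤ m * ((p + q) + (p + q)) + (ρ + σ - 1) + (ρ + σ - 1) := by
    rw [hFidx]
    refine (Finset.card_union_le _ _).trans ?_
    have h1 : ((Finset.range m ×ˢ (Finset.range (p + q) ∪ (Finset.range (p + q)).image (· + n)))
        ∪ Etop 0 ×ˢ {p + q}).card ≤ m * ((p + q) + (p + q)) + (ρ + σ - 1) := by
      refine (Finset.card_union_le _ _).trans ?_
      have h2 : (Finset.range m ×ˢ (Finset.range (p + q) ∪
          (Finset.range (p + q)).image (· + n))).card ≤ m * ((p + q) + (p + q)) := by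
        rw [Finset.card_product, Finset.card_range]
        have h3 : (Finset.range (p + q) ∪ (Finset.range (p + q)).image (· + n)).card ≤
            (p + q) + (p + q) := by
          refine (Finset.card_union_le _ _).trans ?_
          have := Finset.card_image_le (s := Finset.range (p + q)) (f := (· + n))
          simp only [Finset.card_range] at this ⊢
          omega
        exact Nat.mul_le_mul (le_refl m) h3
      have h4 : (Etop 0 ×ˢ ({p + q} : Finset ℕ)).card ≤ ρ + σ - 1 := by
        rw [Finset.card_product, Finset.card_singleton, mul_one]
        exact hEcard 0
      omega
    have h5 : (Etop 1 ×ˢ ({p + q + n} : Finset ℕ)).card ≤ ρ + σ - 1 := by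
      rw [Finset.card_product, Finset.card_singleton, mul_one]
      exact hEcard 1
    omega
  have hfin : ((Fidx : Set (ℕ × ℕ))).Finite := Fidx.finite_toSet
  calc Nat.card ↥((K14.mapA m n '' ↑(K14.FF m r₁ n)) * (K14.mapB m n '' ↑(K14.FF m s₁ n)))
      = ((K14.mapA m n '' ↑(K14.FF m r₁ n)) * (K14.mapB m n '' ↑(K14.FF m s₁ n))).ncard :=
        Nat.card_coe_set_eq _
    _ ≤ ((fun z : ℕ × ℕ => K14.xx m n ^ (z.1 : ℤ) * K14.yy m n ^ z.2) '' ↑Fidx).ncard :=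
        Set.ncard_le_ncard hsub (hfin.image _)
    _ ≤ (Fidx : Set (ℕ × ℕ)).ncard := Set.ncard_image_le hfin
    _ = Fidx.card := Set.ncard_coe_finset _
    _ ≤ m * ((p + q) + (p + q)) + (ρ + σ - 1) + (ρ + σ - 1) := hFcard
    _ ≤ 2 * r₁ + 2 * s₁ - 2 := by
        have e1 : m * ((p + q) + (p + q)) = 2 * (p * m) + 2 * (q * m) := by ring
        obtain ⟨P, hP⟩ : ∃ t, p * m = t := ⟨_, rfl⟩
        obtain ⟨Q, hQ⟩ : ∃ t, q * m = t := ⟨_, rfl⟩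
        rw [hP, hQ] at e1
        rw [hP] at hr1
        rw [hQ] at hs1
        rw [e1]
        omega
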